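/- There exist a compact cake C ⊂ R² (a square with water pools), a family S (squares contained in C) and two finite absolutely continuous value measures V_1, V_2 such that in every S-allocation (X_1, X_2) of disjoint square pieces of C, min_i V_i(X_i)/V_i(C) ≤ 1/4. Concretely: let C = [0,1]², let V_1 = V_2 = V be uniform on four tiny discs of equal measure centered near the four corners of C; then any two disjoint squares inside C can together touch at most 5 of the 8 'agent-disc' shares needed, and in fact at least one agent's square contains at most one disc, giving value at most 1/4 + o(1). -/

import Mathlib

open MeasureTheory
open scoped ENNReal

noncomputable section

/-- Rotation of the plane by angle `θ`. -/
def rot (θ : ℝ) (p : ℝ × ℝ) : ℝ × ℝ :=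
  (p.1 * Real.cos θ - p.2 * Real.sin θ, p.1 * Real.sin θ + p.2 * Real.cos θ)

/-- The square with corner `a`, orientation angle `θ` and side-length `L`. -/
def square (a : ℝ × ℝ) (θ : ℝ) (L : ℝ) : Set (ℝ × ℝ) :=
  (fun p => a + rot θ p) '' Set.Icc (0, 0) (L, L)

/-- The family of all squares (of positive side) in the plane. -/
def Squares : Set (Set (ℝ × ℝ)) := {s | ∃ a θ L, 0 < L ∧ s = square a θ L}


lemma hAux_c_le_one (c s : ℝ) (hcs : c^2 + s^2 = 1) : c ≤ 1 ∧ -1 ≤ c ∧ s ≤ 1 ∧ -1 ≤ s := by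
  refine ⟨?_, ?_, ?_, ?_⟩ <;> nlinarith [sq_nonneg s, sq_nonneg c]

lemma hAux_L_le_one (L c s : ℝ) (hL0 : 0 < L) (hcs : c^2 + s^2 = 1)
    (t1 : L*c + L*s ≤ 1) (t2 : L*c - L*s ≤ 1) (t3 : L*s - L*c ≤ 1) (t4 : -(L*c) - L*s ≤ 1) :
    L ≤ 1 := by
  have m1 : (0:ℝ) ≤ (1 - (L*c + L*s)) * (1 + (L*c + L*s)) :=
    mul_nonneg (by linarith) (by linarith)
  have m2 : (0:ℝ) ≤ (1 - (L*c - L*s)) * (1 + (L*c - L*s)) :=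
    mul_nonneg (by linarith) (by linarith)
  have hLcs : L^2*c^2 + L^2*s^2 = L^2 := by linear_combination (L^2) * hcs
  nlinarith [m1, m2, hLcs, hL0]

lemma hAux_s_small (c s L : ℝ) (hcs : c^2 + s^2 = 1) (hc : 7/10 ≤ c) (hs0 : 0 ≤ s)
    (m5 : 98/100*(c+s)*(c+s) ≤ L*(c+s)) (t1 : L*c + L*s ≤ 1) : s ≤ 3/200 := by
  nlinarith [m5, t1, hcs, mul_nonneg (show (0:ℝ) ≤ c - 7/10 by linarith) hs0]

lemma hAux_c_big (c s : ℝ) (hcs : c^2 + s^2 = 1) (hc : 7/10 ≤ c)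
    (hsl : -(3/200) ≤ s) (hsu : s ≤ 3/200) : 99/100 ≤ c := by
  nlinarith [hcs, hc, mul_nonneg (show (0:ℝ) ≤ 3/200 - s by linarith)
    (show (0:ℝ) ≤ s + 3/200 by linarith)]

lemma hAux_prod_small (u s : ℝ) (hu0 : 0 ≤ u) (hu1 : u ≤ 1)
    (hsl : -(3/200) ≤ s) (hsu : s ≤ 3/200) : -(3/200) ≤ u*s ∧ u*s ≤ 3/200 := by
  constructor <;> nlinarith [mul_le_mul_of_nonneg_left hsl hu0, mul_le_mul_of_nonneg_left hsu hu0]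

lemma hAux_prod_half (u c : ℝ) (h0 : 0 ≤ u) (hu : u ≤ 1/2) (hc0 : 0 ≤ c) (hc1 : c ≤ 1) :
    u*c ≤ 1/2 := by nlinarith

lemma hAux_prod_le (x c : ℝ) (hx : 0 ≤ x) (hc1 : c ≤ 1) : x*c ≤ x := by nlinarith

set_option maxHeartbeats 1000000 in
lemma coreO (a1 a2 c s L xp yp xq yq : ℝ)
    (hcs : c^2 + s^2 = 1) (hc : 7/10 ≤ c) (hL0 : 0 < L)
    (k1 : 0 ≤ a1) (k2 : a1 ≤ 1) (k3 : 0 ≤ a2) (k4 : a2 ≤ 1)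
    (k5 : 0 ≤ a1 + L*c) (k6 : a1 + L*c ≤ 1) (k7 : 0 ≤ a2 + L*s) (k8 : a2 + L*s ≤ 1)
    (k9 : 0 ≤ a1 - L*s) (k10 : a1 - L*s ≤ 1) (k11 : 0 ≤ a2 + L*c) (k12 : a2 + L*c ≤ 1)
    (k13 : 0 ≤ a1 + L*c - L*s) (k14 : a1 + L*c - L*s ≤ 1)
    (k15 : 0 ≤ a2 + L*s + L*c) (k16 : a2 + L*s + L*c ≤ 1)
    (hxp0 : 0 ≤ xp) (hxpL : xp ≤ L) (hyp0 : 0 ≤ yp) (hypL : yp ≤ L)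
    (hxq0 : 0 ≤ xq) (hxqL : xq ≤ L) (hyq0 : 0 ≤ yq) (hyqL : yq ≤ L)
    (b1 : 0 ≤ a1 + xp*c - yp*s) (b2 : a1 + xp*c - yp*s ≤ 1/100)
    (b3 : 0 ≤ a2 + xp*s + yp*c) (b4 : a2 + xp*s + yp*c ≤ 1/100)
    (b5 : 99/100 ≤ a1 + xq*c - yq*s) (b6 : a1 + xq*c - yq*s ≤ 1)
    (b7 : 99/100 ≤ a2 + xq*s + yq*c) (b8 : a2 + xq*s + yq*c ≤ 1) :
    0 ≤ (1/2 - a1)*c + (1/2 - a2)*s ∧ (1/2 - a1)*c + (1/2 - a2)*s ≤ L ∧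
    0 ≤ -(1/2 - a1)*s + (1/2 - a2)*c ∧ -(1/2 - a1)*s + (1/2 - a2)*c ≤ L := by
  have t1 : L*c + L*s ≤ 1 := by linarith only [k6, k9]
  have t2 : L*c - L*s ≤ 1 := by linarith only [k14, k1]
  have t3 : L*s - L*c ≤ 1 := by linarith only [k2, k13]
  have t4 : -(L*c) - L*s ≤ 1 := by linarith only [k4, k15]
  obtain ⟨hc1, hc1', hs1, hs1'⟩ := hAux_c_le_one c s hcs
  have hL1 : L ≤ 1 := hAux_L_le_one L c s hL0 hcs t1 t2 t3 t4
  have e1 : 98/100 ≤ (xq - xp)*c - (yq - yp)*s := by linarith only [b5, b2]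
  have e2 : 98/100 ≤ (xq - xp)*s + (yq - yp)*c := by linarith only [b7, b4]
  have hs : -(3/200) ≤ s ∧ s ≤ 3/200 := by
    rcases le_total 0 s with hs0 | hs0
    · have idx : xq - xp = ((xq - xp)*c - (yq - yp)*s)*c + ((xq - xp)*s + (yq - yp)*c)*s := by
        linear_combination (xp - xq) * hcs
      have m3 : 98/100*c ≤ ((xq - xp)*c - (yq - yp)*s)*c :=
        mul_le_mul_of_nonneg_right e1 (by linarith only [hc])
      have m4 : 98/100*s ≤ ((xq - xp)*s + (yq - yp)*c)*s :=
        mul_le_mul_of_nonneg_right e2 hs0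
      have st1 : 98/100*(c+s) ≤ L := by linarith only [idx, m3, m4, hxqL, hxp0]
      have m5 : 98/100*(c+s)*(c+s) ≤ L*(c+s) :=
        mul_le_mul_of_nonneg_right st1 (by linarith only [hc, hs0])
      exact ⟨by linarith only [hs0], hAux_s_small c s L hcs hc hs0 m5 t1⟩
    · have idy : yq - yp = -(((xq - xp)*c - (yq - yp)*s)*s) + ((xq - xp)*s + (yq - yp)*c)*c := by
        linear_combination (yp - yq) * hcs
      have m3 : 98/100*(-s) ≤ ((xq - xp)*c - (yq - yp)*s)*(-s) :=
        mul_le_mul_of_nonneg_right e1 (by linarith only [hs0])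
      have m4 : 98/100*c ≤ ((xq - xp)*s + (yq - yp)*c)*c :=
        mul_le_mul_of_nonneg_right e2 (by linarith only [hc])
      have st1 : 98/100*(c+(-s)) ≤ L := by linarith only [idy, m3, m4, hyqL, hyp0]
      have m5 : 98/100*(c+(-s))*(c+(-s)) ≤ L*(c+(-s)) :=
        mul_le_mul_of_nonneg_right st1 (by linarith only [hc, hs0])
      have hss := hAux_s_small c (-s) L (by linarith only [hcs]) hc (by linarith only [hs0]) m5
        (by linarith only [t2])
      exact ⟨by linarith only [hss], by linarith only [hs0]⟩
  obtain ⟨hsl, hsu⟩ := hs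
  have hc2 : 99/100 ≤ c := hAux_c_big c s hcs hc hsl hsu
  have m6 := hAux_prod_small yp s hyp0 (by linarith only [hypL, hL1]) hsl hsu
  have m7 := hAux_prod_small xp s hxp0 (by linarith only [hxpL, hL1]) hsl hsu
  have m9 := hAux_prod_small yq s hyq0 (by linarith only [hyqL, hL1]) hsl hsu
  have hxpc : 0 ≤ xp*c := mul_nonneg hxp0 (by linarith only [hc])
  have hypc : 0 ≤ yp*c := mul_nonneg hyp0 (by linarith only [hc])
  have ha1 : a1 ≤ 3/100 := by linarith only [b2, hxpc, m6.2]
  have ha2 : a2 ≤ 3/100 := by linarith only [b4, hypc, m7.1, m7.2]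
  have m8 : xq*c ≤ xq := hAux_prod_le xq c hxq0 hc1
  have hLlb : 9/10 ≤ L := by linarith only [b5, m8, m9.1, hxqL, ha1]
  have g1 : 47/100*(99/100) ≤ (1/2 - a1)*c :=
    mul_le_mul (by linarith only [ha1]) hc2 (by norm_num) (by linarith only [ha1])
  have g2 : 47/100*(99/100) ≤ (1/2 - a2)*c :=
    mul_le_mul (by linarith only [ha2]) hc2 (by norm_num) (by linarith only [ha2])
  have g3 := hAux_prod_small (1/2 - a2) s (by linarith only [ha2]) (by linarith only [k3]) hsl hsu
  have g4 := hAux_prod_small (1/2 - a1) s (by linarith only [ha1]) (by linarith only [k1]) hsl hsu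
  have g5 : (1/2 - a1)*c ≤ 1/2 :=
    hAux_prod_half _ c (by linarith only [ha1]) (by linarith only [k1]) (by linarith only [hc]) hc1
  have g6 : (1/2 - a2)*c ≤ 1/2 :=
    hAux_prod_half _ c (by linarith only [ha2]) (by linarith only [k3]) (by linarith only [hc]) hc1
  exact ⟨by linarith only [g1, g3.1], by linarith only [g5, g3.2, hLlb],
    by linarith only [g2, g4.2], by linarith only [g6, g4.1, hLlb]⟩

lemma hAux_c_big2 (c s : ℝ) (hcs : c^2 + s^2 = 1) (hc : 7/10 ≤ c)
    (hsl : -(1/50) ≤ s) (hsu : s ≤ 1/50) : 99/100 ≤ c := by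
  nlinarith [hcs, hc, mul_nonneg (show (0:ℝ) ≤ 1/50 - s by linarith)
    (show (0:ℝ) ≤ s + 1/50 by linarith)]

lemma hAux_prod_small2 (u s : ℝ) (hu0 : 0 ≤ u) (hu1 : u ≤ 1)
    (hsl : -(1/50) ≤ s) (hsu : s ≤ 1/50) : -(1/50) ≤ u*s ∧ u*s ≤ 1/50 := by
  constructor <;> nlinarith [mul_le_mul_of_nonneg_left hsl hu0, mul_le_mul_of_nonneg_left hsu hu0]

lemma hAux_xq_s (xq s : ℝ) (hxq : 24/25 ≤ xq) (hp : xq*s ≤ 1/100) (hs0 : 0 ≤ s) :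
    s ≤ 11/1000 := by nlinarith

lemma hAux_y_small (y c : ℝ) (hy0 : 0 ≤ y) (hc : 7/10 ≤ c) (h : y*c ≤ 1/100) : y ≤ 1/70 := by
  nlinarith [mul_le_mul_of_nonneg_left hc hy0]

lemma hAux_sig (c sig L xp xq dy : ℝ) (hcs : c^2 + sig^2 = 1) (hc : 7/10 ≤ c)
    (hs0 : 0 ≤ sig) (hL1 : L ≤ 1) (hL0 : 0 < L)
    (hxp0 : 0 ≤ xp) (hxq : xq ≤ L) (hdy : dy ≤ L)
    (F1 : sig*(L - xp) ≤ 1/100)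
    (t2 : L*c + L*sig ≤ 1)
    (e1 : 98/100 ≤ (xq - xp)*c + dy*sig) : sig ≤ 1/50 := by
  by_contra hcon
  push_neg at hcon
  have hsig1 : sig ≤ 1 := by nlinarith [sq_nonneg c]
  have hc0 : (0:ℝ) ≤ c := by linarith
  have e1' : 98/100 ≤ (L - xp)*c + dy*sig := by
    nlinarith [mul_le_mul_of_nonneg_right (show xq - xp ≤ L - xp by linarith) hc0]
  have h1 : 98/100*sig ≤ ((L - xp)*c + dy*sig)*sig :=
    mul_le_mul_of_nonneg_right e1' hs0
  have h2 : sig*(L - xp)*c ≤ 1/100*c :=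
    mul_le_mul_of_nonneg_right F1 hc0
  have h3 : dy*(sig*sig) ≤ L*(sig*sig) :=
    mul_le_mul_of_nonneg_right hdy (mul_nonneg hs0 hs0)
  have hA : 98/100*sig - 1/100*c ≤ L*(sig*sig) := by nlinarith [h1, h2, h3]
  have hB : (L*(c + sig))*(sig*sig) ≤ 1*(sig*sig) :=
    mul_le_mul_of_nonneg_right (by linarith) (mul_nonneg hs0 hs0)
  have hC : (98/100*sig - 1/100*c)*(c + sig) ≤ L*(sig*sig)*(c + sig) :=
    mul_le_mul_of_nonneg_right hA (by linarith)
  nlinarith [hB, hC, hcs, mul_nonneg (show (0:ℝ) ≤ c - 7/10 by linarith) hs0,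
    mul_nonneg hs0 (show (0:ℝ) ≤ 1 - sig by linarith)]

set_option maxHeartbeats 1000000 in
lemma coreA (a1 a2 c s L xp yp xq yq : ℝ)
    (hcs : c^2 + s^2 = 1) (hc : 7/10 ≤ c) (hL0 : 0 < L)
    (k1 : 0 ≤ a1) (k2 : a1 ≤ 1) (k3 : 0 ≤ a2) (k4 : a2 ≤ 1)
    (k5 : 0 ≤ a1 + L*c) (k6 : a1 + L*c ≤ 1) (k7 : 0 ≤ a2 + L*s) (k8 : a2 + L*s ≤ 1)
    (k9 : 0 ≤ a1 - L*s) (k10 : a1 - L*s ≤ 1) (k11 : 0 ≤ a2 + L*c) (k12 : a2 + L*c ≤ 1)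
    (k13 : 0 ≤ a1 + L*c - L*s) (k14 : a1 + L*c - L*s ≤ 1)
    (k15 : 0 ≤ a2 + L*s + L*c) (k16 : a2 + L*s + L*c ≤ 1)
    (hxp0 : 0 ≤ xp) (hxpL : xp ≤ L) (hyp0 : 0 ≤ yp) (hypL : yp ≤ L)
    (hxq0 : 0 ≤ xq) (hxqL : xq ≤ L) (hyq0 : 0 ≤ yq) (hyqL : yq ≤ L)
    (b1 : 0 ≤ a1 + xp*c - yp*s) (b2 : a1 + xp*c - yp*s ≤ 1/100)
    (b3 : 0 ≤ a2 + xp*s + yp*c) (b4 : a2 + xp*s + yp*c ≤ 1/100)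
    (b5 : 99/100 ≤ a1 + xq*c - yq*s) (b6 : a1 + xq*c - yq*s ≤ 1)
    (b7 : 0 ≤ a2 + xq*s + yq*c) (b8 : a2 + xq*s + yq*c ≤ 1/100) :
    0 ≤ (1/2 - a1)*c + (1/2 - a2)*s ∧ (1/2 - a1)*c + (1/2 - a2)*s ≤ L ∧
    0 ≤ -(1/2 - a1)*s + (1/2 - a2)*c ∧ -(1/2 - a1)*s + (1/2 - a2)*c ≤ L := by
  have t1 : L*c + L*s ≤ 1 := by linarith only [k6, k9]
  have t2 : L*c - L*s ≤ 1 := by linarith only [k14, k1]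
  have t3 : L*s - L*c ≤ 1 := by linarith only [k2, k13]
  have t4 : -(L*c) - L*s ≤ 1 := by linarith only [k4, k15]
  obtain ⟨hc1, hc1', hs1, hs1'⟩ := hAux_c_le_one c s hcs
  have hL1 : L ≤ 1 := hAux_L_le_one L c s hL0 hcs t1 t2 t3 t4
  have hc0 : (0:ℝ) ≤ c := by linarith only [hc]
  have e1 : 98/100 ≤ (xq - xp)*c - (yq - yp)*s := by linarith only [b5, b2]
  have hs : -(1/50) ≤ s ∧ s ≤ 1/50 := by
    rcases le_total 0 s with hs0 | hs0
    · have hxqs0 : 0 ≤ xq*s := mul_nonneg hxq0 hs0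
      have hxps0 : 0 ≤ xp*s := mul_nonneg hxp0 hs0
      have hyqc0 : 0 ≤ yq*c := mul_nonneg hyq0 hc0
      have hyqc : yq*c ≤ 1/100 := by linarith only [b8, k3, hxqs0]
      have hyq : yq ≤ 1/70 := hAux_y_small yq c hyq0 hc hyqc
      have hxqs : xq*s ≤ 1/100 := by linarith only [b8, k3, hyqc0]
      have hypc : yp*c ≤ 1/100 := by linarith only [b4, k3, hxps0]
      have hyp : yp ≤ 1/70 := hAux_y_small yp c hyp0 hc hypc
      have hyps1 : yp*s ≤ yp*1 := mul_le_mul_of_nonneg_left hs1 hyp0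
      have hyqs0 : 0 ≤ yq*s := mul_nonneg hyq0 hs0
      have hyqs : -(1/70) ≤ (yq - yp)*s := by linarith only [hyps1, hyp, hyqs0]
      have h1 : 98/100 - 1/70 ≤ (xq - xp)*c := by linarith only [e1, hyqs]
      have h2 : (xq - xp)*c ≤ xq*c :=
        mul_le_mul_of_nonneg_right (by linarith only [hxp0]) hc0
      have h3 : xq*c ≤ xq := hAux_prod_le xq c hxq0 hc1
      have hxq : 24/25 ≤ xq := by linarith only [h1, h2, h3]
      exact ⟨by linarith only [hs0], by linarith only [hAux_xq_s xq s hxq hxqs hs0]⟩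
    · have hypc0 : 0 ≤ yp*c := mul_nonneg hyp0 hc0
      have F1 : (-s)*(L - xp) ≤ 1/100 := by linarith only [k7, b4, hypc0]
      have hsig := hAux_sig c (-s) L xp xq (yq - yp) (by linarith only [hcs]) hc
        (by linarith only [hs0]) hL1 hL0 hxp0 hxqL (by linarith only [hyqL, hyp0]) F1
        (by linarith only [t2]) (by linarith only [e1])
      exact ⟨by linarith only [hsig], by linarith only [hs0]⟩
  obtain ⟨hsl, hsu⟩ := hs
  have hc2 : 99/100 ≤ c := hAux_c_big2 c s hcs hc hsl hsu
  have m6 := hAux_prod_small2 yp s hyp0 (by linarith only [hypL, hL1]) hsl hsu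
  have m7 := hAux_prod_small2 xp s hxp0 (by linarith only [hxpL, hL1]) hsl hsu
  have m9 := hAux_prod_small2 yq s hyq0 (by linarith only [hyqL, hL1]) hsl hsu
  have hxpc : 0 ≤ xp*c := mul_nonneg hxp0 hc0
  have hypc : 0 ≤ yp*c := mul_nonneg hyp0 hc0
  have ha1 : a1 ≤ 3/100 := by linarith only [b2, hxpc, m6.2]
  have ha2 : a2 ≤ 3/100 := by linarith only [b4, hypc, m7.1, m7.2]
  have m8 : xq*c ≤ xq := hAux_prod_le xq c hxq0 hc1
  have hLlb : 9/10 ≤ L := by linarith only [b5, m8, m9.1, hxqL, ha1]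
  have g1 : 47/100*(99/100) ≤ (1/2 - a1)*c :=
    mul_le_mul (by linarith only [ha1]) hc2 (by norm_num) (by linarith only [ha1])
  have g2 : 47/100*(99/100) ≤ (1/2 - a2)*c :=
    mul_le_mul (by linarith only [ha2]) hc2 (by norm_num) (by linarith only [ha2])
  have g3 := hAux_prod_small2 (1/2 - a2) s (by linarith only [ha2]) (by linarith only [k3]) hsl hsu
  have g4 := hAux_prod_small2 (1/2 - a1) s (by linarith only [ha1]) (by linarith only [k1]) hsl hsu
  have g5 : (1/2 - a1)*c ≤ 1/2 :=
    hAux_prod_half _ c (by linarith only [ha1]) (by linarith only [k1]) hc0 hc1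
  have g6 : (1/2 - a2)*c ≤ 1/2 :=
    hAux_prod_half _ c (by linarith only [ha2]) (by linarith only [k3]) hc0 hc1
  exact ⟨by linarith only [g1, g3.1], by linarith only [g5, g3.2, hLlb],
    by linarith only [g2, g4.2], by linarith only [g6, g4.1, hLlb]⟩

lemma hAux_regime (c s : ℝ) (hcs : c^2 + s^2 = 1) :
    7/10 ≤ c ∨ c ≤ -(7/10) ∨ 7/10 ≤ s ∨ s ≤ -(7/10) := by
  by_contra h
  push_neg at h
  obtain ⟨h1, h2, h3, h4⟩ := h
  nlinarith [hcs, mul_pos (show (0:ℝ) < 7/10 - c by linarith) (show (0:ℝ) < c + 7/10 by linarith),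
    mul_pos (show (0:ℝ) < 7/10 - s by linarith) (show (0:ℝ) < s + 7/10 by linarith)]

set_option maxHeartbeats 2000000 in
lemma liftA (a1 a2 c s L xp yp xq yq : ℝ)
    (hcs : c^2 + s^2 = 1) (hL0 : 0 < L)
    (k1 : 0 ≤ a1) (k2 : a1 ≤ 1) (k3 : 0 ≤ a2) (k4 : a2 ≤ 1)
    (k5 : 0 ≤ a1 + L*c) (k6 : a1 + L*c ≤ 1) (k7 : 0 ≤ a2 + L*s) (k8 : a2 + L*s ≤ 1)
    (k9 : 0 ≤ a1 - L*s) (k10 : a1 - L*s ≤ 1) (k11 : 0 ≤ a2 + L*c) (k12 : a2 + L*c ≤ 1)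
    (k13 : 0 ≤ a1 + L*c - L*s) (k14 : a1 + L*c - L*s ≤ 1)
    (k15 : 0 ≤ a2 + L*s + L*c) (k16 : a2 + L*s + L*c ≤ 1)
    (hxp0 : 0 ≤ xp) (hxpL : xp ≤ L) (hyp0 : 0 ≤ yp) (hypL : yp ≤ L)
    (hxq0 : 0 ≤ xq) (hxqL : xq ≤ L) (hyq0 : 0 ≤ yq) (hyqL : yq ≤ L)
    (b1 : 0 ≤ a1 + xp*c - yp*s) (b2 : a1 + xp*c - yp*s ≤ 1/100)
    (b3 : 0 ≤ a2 + xp*s + yp*c) (b4 : a2 + xp*s + yp*c ≤ 1/100)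
    (b5 : 99/100 ≤ a1 + xq*c - yq*s) (b6 : a1 + xq*c - yq*s ≤ 1)
    (b7 : 0 ≤ a2 + xq*s + yq*c) (b8 : a2 + xq*s + yq*c ≤ 1/100) :
    0 ≤ (1/2 - a1)*c + (1/2 - a2)*s ∧ (1/2 - a1)*c + (1/2 - a2)*s ≤ L ∧
    0 ≤ -(1/2 - a1)*s + (1/2 - a2)*c ∧ -(1/2 - a1)*s + (1/2 - a2)*c ≤ L := by
  have hid : L*c^2 + L*s^2 = L := by linear_combination L * hcs
  rcases hAux_regime c s hcs with hr | hr | hr | hr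
  · obtain ⟨d1, d2, d3, d4⟩ := coreA a1 a2 c s L xp yp xq yq
      (by linarith only [hcs]) (by linarith only [hr]) hL0 k1 k2 k3 k4 k5 k6 k7 k8 k9 k10 k11 k12 k13 k14 k15 k16 hxp0 hxpL hyp0 hypL hxq0 hxqL hyq0 hyqL b1 b2 b3 b4 b5 b6 b7 b8
    refine ⟨?_, ?_, ?_, ?_⟩ <;> linarith only [d1, d2, d3, d4, hid]
  · obtain ⟨d1, d2, d3, d4⟩ := coreA (a1+L*c-L*s) (a2+L*s+L*c) (-c) (-s) L (L-xp) (L-yp) (L-xq) (L-yq)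
      (by linarith only [hcs]) (by linarith only [hr]) hL0 (by linarith only [k13]) (by linarith only [k14]) (by linarith only [k15]) (by linarith only [k16]) (by linarith only [k9]) (by linarith only [k10]) (by linarith only [k11]) (by linarith only [k12]) (by linarith only [k5]) (by linarith only [k6]) (by linarith only [k7]) (by linarith only [k8]) (by linarith only [k1]) (by linarith only [k2]) (by linarith only [k3]) (by linarith only [k4]) (by linarith only [hxpL]) (by linarith only [hxp0]) (by linarith only [hypL]) (by linarith only [hyp0]) (by linarith only [hxqL]) (by linarith only [hxq0]) (by linarith only [hyqL]) (by linarith only [hyq0]) (by linarith only [b1]) (by linarith only [b2]) (by linarith only [b3]) (by linarith only [b4]) (by linarith only [b5]) (by linarith only [b6]) (by linarith only [b7]) (by linarith only [b8])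
    refine ⟨?_, ?_, ?_, ?_⟩ <;> linarith only [d1, d2, d3, d4, hid]
  · obtain ⟨d1, d2, d3, d4⟩ := coreA (a1-L*s) (a2+L*c) s (-c) L (L-yp) xp (L-yq) xq
      (by linarith only [hcs]) (by linarith only [hr]) hL0 (by linarith only [k9]) (by linarith only [k10]) (by linarith only [k11]) (by linarith only [k12]) (by linarith only [k1]) (by linarith only [k2]) (by linarith only [k3]) (by linarith only [k4]) (by linarith only [k13]) (by linarith only [k14]) (by linarith only [k15]) (by linarith only [k16]) (by linarith only [k5]) (by linarith only [k6]) (by linarith only [k7]) (by linarith only [k8]) (by linarith only [hypL]) (by linarith only [hyp0]) (by linarith only [hxp0]) (by linarith only [hxpL]) (by linarith only [hyqL]) (by linarith only [hyq0]) (by linarith only [hxq0]) (by linarith only [hxqL]) (by linarith only [b1]) (by linarith only [b2]) (by linarith only [b3]) (by linarith only [b4]) (by linarith only [b5]) (by linarith only [b6]) (by linarith only [b7]) (by linarith only [b8])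
    refine ⟨?_, ?_, ?_, ?_⟩ <;> linarith only [d1, d2, d3, d4, hid]
  · obtain ⟨d1, d2, d3, d4⟩ := coreA (a1+L*c) (a2+L*s) (-s) c L yp (L-xp) yq (L-xq)
      (by linarith only [hcs]) (by linarith only [hr]) hL0 (by linarith only [k5]) (by linarith only [k6]) (by linarith only [k7]) (by linarith only [k8]) (by linarith only [k13]) (by linarith only [k14]) (by linarith only [k15]) (by linarith only [k16]) (by linarith only [k1]) (by linarith only [k2]) (by linarith only [k3]) (by linarith only [k4]) (by linarith only [k9]) (by linarith only [k10]) (by linarith only [k11]) (by linarith only [k12]) (by linarith only [hyp0]) (by linarith only [hypL]) (by linarith only [hxpL]) (by linarith only [hxp0]) (by linarith only [hyq0]) (by linarith only [hyqL]) (by linarith only [hxqL]) (by linarith only [hxq0]) (by linarith only [b1]) (by linarith only [b2]) (by linarith only [b3]) (by linarith only [b4]) (by linarith only [b5]) (by linarith only [b6]) (by linarith only [b7]) (by linarith only [b8])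
    refine ⟨?_, ?_, ?_, ?_⟩ <;> linarith only [d1, d2, d3, d4, hid]

set_option maxHeartbeats 2000000 in
lemma liftO (a1 a2 c s L xp yp xq yq : ℝ)
    (hcs : c^2 + s^2 = 1) (hL0 : 0 < L)
    (k1 : 0 ≤ a1) (k2 : a1 ≤ 1) (k3 : 0 ≤ a2) (k4 : a2 ≤ 1)
    (k5 : 0 ≤ a1 + L*c) (k6 : a1 + L*c ≤ 1) (k7 : 0 ≤ a2 + L*s) (k8 : a2 + L*s ≤ 1)
    (k9 : 0 ≤ a1 - L*s) (k10 : a1 - L*s ≤ 1) (k11 : 0 ≤ a2 + L*c) (k12 : a2 + L*c ≤ 1)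
    (k13 : 0 ≤ a1 + L*c - L*s) (k14 : a1 + L*c - L*s ≤ 1)
    (k15 : 0 ≤ a2 + L*s + L*c) (k16 : a2 + L*s + L*c ≤ 1)
    (hxp0 : 0 ≤ xp) (hxpL : xp ≤ L) (hyp0 : 0 ≤ yp) (hypL : yp ≤ L)
    (hxq0 : 0 ≤ xq) (hxqL : xq ≤ L) (hyq0 : 0 ≤ yq) (hyqL : yq ≤ L)
    (b1 : 0 ≤ a1 + xp*c - yp*s) (b2 : a1 + xp*c - yp*s ≤ 1/100)
    (b3 : 0 ≤ a2 + xp*s + yp*c) (b4 : a2 + xp*s + yp*c ≤ 1/100)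
    (b5 : 99/100 ≤ a1 + xq*c - yq*s) (b6 : a1 + xq*c - yq*s ≤ 1)
    (b7 : 99/100 ≤ a2 + xq*s + yq*c) (b8 : a2 + xq*s + yq*c ≤ 1) :
    0 ≤ (1/2 - a1)*c + (1/2 - a2)*s ∧ (1/2 - a1)*c + (1/2 - a2)*s ≤ L ∧
    0 ≤ -(1/2 - a1)*s + (1/2 - a2)*c ∧ -(1/2 - a1)*s + (1/2 - a2)*c ≤ L := by
  have hid : L*c^2 + L*s^2 = L := by linear_combination L * hcs
  rcases hAux_regime c s hcs with hr | hr | hr | hr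
  · obtain ⟨d1, d2, d3, d4⟩ := coreO a1 a2 c s L xp yp xq yq
      (by linarith only [hcs]) (by linarith only [hr]) hL0 k1 k2 k3 k4 k5 k6 k7 k8 k9 k10 k11 k12 k13 k14 k15 k16 hxp0 hxpL hyp0 hypL hxq0 hxqL hyq0 hyqL b1 b2 b3 b4 b5 b6 b7 b8
    refine ⟨?_, ?_, ?_, ?_⟩ <;> linarith only [d1, d2, d3, d4, hid]
  · obtain ⟨d1, d2, d3, d4⟩ := coreO (a1+L*c-L*s) (a2+L*s+L*c) (-c) (-s) L (L-xp) (L-yp) (L-xq) (L-yq)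
      (by linarith only [hcs]) (by linarith only [hr]) hL0 (by linarith only [k13]) (by linarith only [k14]) (by linarith only [k15]) (by linarith only [k16]) (by linarith only [k9]) (by linarith only [k10]) (by linarith only [k11]) (by linarith only [k12]) (by linarith only [k5]) (by linarith only [k6]) (by linarith only [k7]) (by linarith only [k8]) (by linarith only [k1]) (by linarith only [k2]) (by linarith only [k3]) (by linarith only [k4]) (by linarith only [hxpL]) (by linarith only [hxp0]) (by linarith only [hypL]) (by linarith only [hyp0]) (by linarith only [hxqL]) (by linarith only [hxq0]) (by linarith only [hyqL]) (by linarith only [hyq0]) (by linarith only [b1]) (by linarith only [b2]) (by linarith only [b3]) (by linarith only [b4]) (by linarith only [b5]) (by linarith only [b6]) (by linarith only [b7]) (by linarith only [b8])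
    refine ⟨?_, ?_, ?_, ?_⟩ <;> linarith only [d1, d2, d3, d4, hid]
  · obtain ⟨d1, d2, d3, d4⟩ := coreO (a1-L*s) (a2+L*c) s (-c) L (L-yp) xp (L-yq) xq
      (by linarith only [hcs]) (by linarith only [hr]) hL0 (by linarith only [k9]) (by linarith only [k10]) (by linarith only [k11]) (by linarith only [k12]) (by linarith only [k1]) (by linarith only [k2]) (by linarith only [k3]) (by linarith only [k4]) (by linarith only [k13]) (by linarith only [k14]) (by linarith only [k15]) (by linarith only [k16]) (by linarith only [k5]) (by linarith only [k6]) (by linarith only [k7]) (by linarith only [k8]) (by linarith only [hypL]) (by linarith only [hyp0]) (by linarith only [hxp0]) (by linarith only [hxpL]) (by linarith only [hyqL]) (by linarith only [hyq0]) (by linarith only [hxq0]) (by linarith only [hxqL]) (by linarith only [b1]) (by linarith only [b2]) (by linarith only [b3]) (by linarith only [b4]) (by linarith only [b5]) (by linarith only [b6]) (by linarith only [b7]) (by linarith only [b8])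
    refine ⟨?_, ?_, ?_, ?_⟩ <;> linarith only [d1, d2, d3, d4, hid]
  · obtain ⟨d1, d2, d3, d4⟩ := coreO (a1+L*c) (a2+L*s) (-s) c L yp (L-xp) yq (L-xq)
      (by linarith only [hcs]) (by linarith only [hr]) hL0 (by linarith only [k5]) (by linarith only [k6]) (by linarith only [k7]) (by linarith only [k8]) (by linarith only [k13]) (by linarith only [k14]) (by linarith only [k15]) (by linarith only [k16]) (by linarith only [k1]) (by linarith only [k2]) (by linarith only [k3]) (by linarith only [k4]) (by linarith only [k9]) (by linarith only [k10]) (by linarith only [k11]) (by linarith only [k12]) (by linarith only [hyp0]) (by linarith only [hypL]) (by linarith only [hxpL]) (by linarith only [hxp0]) (by linarith only [hyq0]) (by linarith only [hyqL]) (by linarith only [hxqL]) (by linarith only [hxq0]) (by linarith only [b1]) (by linarith only [b2]) (by linarith only [b3]) (by linarith only [b4]) (by linarith only [b5]) (by linarith only [b6]) (by linarith only [b7]) (by linarith only [b8])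
    refine ⟨?_, ?_, ?_, ?_⟩ <;> linarith only [d1, d2, d3, d4, hid]

set_option maxHeartbeats 2000000 in
lemma geomPair (a1 a2 c s L xp yp xq yq : ℝ)
    (hcs : c^2 + s^2 = 1) (hL0 : 0 < L)
    (k1 : 0 ≤ a1) (k2 : a1 ≤ 1) (k3 : 0 ≤ a2) (k4 : a2 ≤ 1)
    (k5 : 0 ≤ a1 + L*c) (k6 : a1 + L*c ≤ 1) (k7 : 0 ≤ a2 + L*s) (k8 : a2 + L*s ≤ 1)
    (k9 : 0 ≤ a1 - L*s) (k10 : a1 - L*s ≤ 1) (k11 : 0 ≤ a2 + L*c) (k12 : a2 + L*c ≤ 1)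
    (k13 : 0 ≤ a1 + L*c - L*s) (k14 : a1 + L*c - L*s ≤ 1)
    (k15 : 0 ≤ a2 + L*s + L*c) (k16 : a2 + L*s + L*c ≤ 1)
    (hxp0 : 0 ≤ xp) (hxpL : xp ≤ L) (hyp0 : 0 ≤ yp) (hypL : yp ≤ L)
    (hxq0 : 0 ≤ xq) (hxqL : xq ≤ L) (hyq0 : 0 ≤ yq) (hyqL : yq ≤ L)
    (hbox :
      ((0 ≤ a1 + (xp*c - yp*s) ∧ a1 + (xp*c - yp*s) ≤ 1/100 ∧ 0 ≤ a2 + (xp*s + yp*c) ∧ a2 + (xp*s + yp*c) ≤ 1/100) ∧ (99/100 ≤ a1 + (xq*c - yq*s) ∧ a1 + (xq*c - yq*s) ≤ 1 ∧ 0 ≤ a2 + (xq*s + yq*c) ∧ a2 + (xq*s + yq*c) ≤ 1/100)) ∨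
      ((0 ≤ a1 + (xp*c - yp*s) ∧ a1 + (xp*c - yp*s) ≤ 1/100 ∧ 0 ≤ a2 + (xp*s + yp*c) ∧ a2 + (xp*s + yp*c) ≤ 1/100) ∧ (0 ≤ a1 + (xq*c - yq*s) ∧ a1 + (xq*c - yq*s) ≤ 1/100 ∧ 99/100 ≤ a2 + (xq*s + yq*c) ∧ a2 + (xq*s + yq*c) ≤ 1)) ∨
      ((0 ≤ a1 + (xp*c - yp*s) ∧ a1 + (xp*c - yp*s) ≤ 1/100 ∧ 0 ≤ a2 + (xp*s + yp*c) ∧ a2 + (xp*s + yp*c) ≤ 1/100) ∧ (99/100 ≤ a1 + (xq*c - yq*s) ∧ a1 + (xq*c - yq*s) ≤ 1 ∧ 99/100 ≤ a2 + (xq*s + yq*c) ∧ a2 + (xq*s + yq*c) ≤ 1)) ∨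
      ((99/100 ≤ a1 + (xp*c - yp*s) ∧ a1 + (xp*c - yp*s) ≤ 1 ∧ 0 ≤ a2 + (xp*s + yp*c) ∧ a2 + (xp*s + yp*c) ≤ 1/100) ∧ (0 ≤ a1 + (xq*c - yq*s) ∧ a1 + (xq*c - yq*s) ≤ 1/100 ∧ 99/100 ≤ a2 + (xq*s + yq*c) ∧ a2 + (xq*s + yq*c) ≤ 1)) ∨
      ((99/100 ≤ a1 + (xp*c - yp*s) ∧ a1 + (xp*c - yp*s) ≤ 1 ∧ 0 ≤ a2 + (xp*s + yp*c) ∧ a2 + (xp*s + yp*c) ≤ 1/100) ∧ (99/100 ≤ a1 + (xq*c - yq*s) ∧ a1 + (xq*c - yq*s) ≤ 1 ∧ 99/100 ≤ a2 + (xq*s + yq*c) ∧ a2 + (xq*s + yq*c) ≤ 1)) ∨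
      ((0 ≤ a1 + (xp*c - yp*s) ∧ a1 + (xp*c - yp*s) ≤ 1/100 ∧ 99/100 ≤ a2 + (xp*s + yp*c) ∧ a2 + (xp*s + yp*c) ≤ 1) ∧ (99/100 ≤ a1 + (xq*c - yq*s) ∧ a1 + (xq*c - yq*s) ≤ 1 ∧ 99/100 ≤ a2 + (xq*s + yq*c) ∧ a2 + (xq*s + yq*c) ≤ 1))) :
    0 ≤ (1/2 - a1)*c + (1/2 - a2)*s ∧ (1/2 - a1)*c + (1/2 - a2)*s ≤ L ∧
    0 ≤ -(1/2 - a1)*s + (1/2 - a2)*c ∧ -(1/2 - a1)*s + (1/2 - a2)*c ≤ L := by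
  rcases hbox with ⟨⟨hb1, hb2, hb3, hb4⟩, hb5, hb6, hb7, hb8⟩ | ⟨⟨hb1, hb2, hb3, hb4⟩, hb5, hb6, hb7, hb8⟩ | ⟨⟨hb1, hb2, hb3, hb4⟩, hb5, hb6, hb7, hb8⟩ | ⟨⟨hb1, hb2, hb3, hb4⟩, hb5, hb6, hb7, hb8⟩ | ⟨⟨hb1, hb2, hb3, hb4⟩, hb5, hb6, hb7, hb8⟩ | ⟨⟨hb1, hb2, hb3, hb4⟩, hb5, hb6, hb7, hb8⟩
  · obtain ⟨d1, d2, d3, d4⟩ := liftA a1 a2 c s L xp yp xq yq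
      (by linarith only [hcs]) hL0 (by linarith only [k1]) (by linarith only [k2]) (by linarith only [k3]) (by linarith only [k4]) (by linarith only [k5]) (by linarith only [k6]) (by linarith only [k7]) (by linarith only [k8]) (by linarith only [k9]) (by linarith only [k10]) (by linarith only [k11]) (by linarith only [k12]) (by linarith only [k13]) (by linarith only [k14]) (by linarith only [k15]) (by linarith only [k16]) (by linarith only [hxp0]) (by linarith only [hxpL]) (by linarith only [hyp0]) (by linarith only [hypL]) (by linarith only [hxq0]) (by linarith only [hxqL]) (by linarith only [hyq0]) (by linarith only [hyqL]) (by linarith only [hb1]) (by linarith only [hb2]) (by linarith only [hb3]) (by linarith only [hb4]) (by linarith only [hb5]) (by linarith only [hb6]) (by linarith only [hb7]) (by linarith only [hb8])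
    refine ⟨?_, ?_, ?_, ?_⟩ <;> linarith only [d1, d2, d3, d4]
  · obtain ⟨d1, d2, d3, d4⟩ := liftA a2 a1 c (-s) L yp xp yq xq
      (by linarith only [hcs]) hL0 (by linarith only [k3]) (by linarith only [k4]) (by linarith only [k1]) (by linarith only [k2]) (by linarith only [k11]) (by linarith only [k12]) (by linarith only [k9]) (by linarith only [k10]) (by linarith only [k7]) (by linarith only [k8]) (by linarith only [k5]) (by linarith only [k6]) (by linarith only [k15]) (by linarith only [k16]) (by linarith only [k13]) (by linarith only [k14]) (by linarith only [hyp0]) (by linarith only [hypL]) (by linarith only [hxp0]) (by linarith only [hxpL]) (by linarith only [hyq0]) (by linarith only [hyqL]) (by linarith only [hxq0]) (by linarith only [hxqL]) (by linarith only [hb3]) (by linarith only [hb4]) (by linarith only [hb1]) (by linarith only [hb2]) (by linarith only [hb7]) (by linarith only [hb8]) (by linarith only [hb5]) (by linarith only [hb6])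
    refine ⟨?_, ?_, ?_, ?_⟩ <;> linarith only [d1, d2, d3, d4]
  · obtain ⟨d1, d2, d3, d4⟩ := liftO a1 a2 c s L xp yp xq yq
      (by linarith only [hcs]) hL0 (by linarith only [k1]) (by linarith only [k2]) (by linarith only [k3]) (by linarith only [k4]) (by linarith only [k5]) (by linarith only [k6]) (by linarith only [k7]) (by linarith only [k8]) (by linarith only [k9]) (by linarith only [k10]) (by linarith only [k11]) (by linarith only [k12]) (by linarith only [k13]) (by linarith only [k14]) (by linarith only [k15]) (by linarith only [k16]) (by linarith only [hxp0]) (by linarith only [hxpL]) (by linarith only [hyp0]) (by linarith only [hypL]) (by linarith only [hxq0]) (by linarith only [hxqL]) (by linarith only [hyq0]) (by linarith only [hyqL]) (by linarith only [hb1]) (by linarith only [hb2]) (by linarith only [hb3]) (by linarith only [hb4]) (by linarith only [hb5]) (by linarith only [hb6]) (by linarith only [hb7]) (by linarith only [hb8])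
    refine ⟨?_, ?_, ?_, ?_⟩ <;> linarith only [d1, d2, d3, d4]
  · obtain ⟨d1, d2, d3, d4⟩ := liftO (1-a1) a2 s c L yp xp yq xq
      (by linarith only [hcs]) hL0 (by linarith only [k2]) (by linarith only [k1]) (by linarith only [k3]) (by linarith only [k4]) (by linarith only [k10]) (by linarith only [k9]) (by linarith only [k11]) (by linarith only [k12]) (by linarith only [k6]) (by linarith only [k5]) (by linarith only [k7]) (by linarith only [k8]) (by linarith only [k14]) (by linarith only [k13]) (by linarith only [k15]) (by linarith only [k16]) (by linarith only [hyp0]) (by linarith only [hypL]) (by linarith only [hxp0]) (by linarith only [hxpL]) (by linarith only [hyq0]) (by linarith only [hyqL]) (by linarith only [hxq0]) (by linarith only [hxqL]) (by linarith only [hb2]) (by linarith only [hb1]) (by linarith only [hb3]) (by linarith only [hb4]) (by linarith only [hb6]) (by linarith only [hb5]) (by linarith only [hb7]) (by linarith only [hb8])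
    refine ⟨?_, ?_, ?_, ?_⟩ <;> linarith only [d1, d2, d3, d4]
  · obtain ⟨d1, d2, d3, d4⟩ := liftA a2 (1-a1) s (-c) L xp yp xq yq
      (by linarith only [hcs]) hL0 (by linarith only [k3]) (by linarith only [k4]) (by linarith only [k2]) (by linarith only [k1]) (by linarith only [k7]) (by linarith only [k8]) (by linarith only [k6]) (by linarith only [k5]) (by linarith only [k11]) (by linarith only [k12]) (by linarith only [k10]) (by linarith only [k9]) (by linarith only [k15]) (by linarith only [k16]) (by linarith only [k14]) (by linarith only [k13]) (by linarith only [hxp0]) (by linarith only [hxpL]) (by linarith only [hyp0]) (by linarith only [hypL]) (by linarith only [hxq0]) (by linarith only [hxqL]) (by linarith only [hyq0]) (by linarith only [hyqL]) (by linarith only [hb3]) (by linarith only [hb4]) (by linarith only [hb2]) (by linarith only [hb1]) (by linarith only [hb7]) (by linarith only [hb8]) (by linarith only [hb6]) (by linarith only [hb5])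
    refine ⟨?_, ?_, ?_, ?_⟩ <;> linarith only [d1, d2, d3, d4]
  · obtain ⟨d1, d2, d3, d4⟩ := liftA a1 (1-a2) (-s) (-c) L yp xp yq xq
      (by linarith only [hcs]) hL0 (by linarith only [k1]) (by linarith only [k2]) (by linarith only [k4]) (by linarith only [k3]) (by linarith only [k9]) (by linarith only [k10]) (by linarith only [k12]) (by linarith only [k11]) (by linarith only [k5]) (by linarith only [k6]) (by linarith only [k8]) (by linarith only [k7]) (by linarith only [k13]) (by linarith only [k14]) (by linarith only [k16]) (by linarith only [k15]) (by linarith only [hyp0]) (by linarith only [hypL]) (by linarith only [hxp0]) (by linarith only [hxpL]) (by linarith only [hyq0]) (by linarith only [hyqL]) (by linarith only [hxq0]) (by linarith only [hxqL]) (by linarith only [hb1]) (by linarith only [hb2]) (by linarith only [hb4]) (by linarith only [hb3]) (by linarith only [hb5]) (by linarith only [hb6]) (by linarith only [hb8]) (by linarith only [hb7])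
    refine ⟨?_, ?_, ?_, ?_⟩ <;> linarith only [d1, d2, d3, d4]

def K1 : Set (ℝ × ℝ) := Set.Icc (0, 0) (1/100, 1/100)
def K2 : Set (ℝ × ℝ) := Set.Icc (99/100, 0) (1, 1/100)
def K3 : Set (ℝ × ℝ) := Set.Icc (0, 99/100) (1/100, 1)
def K4 : Set (ℝ × ℝ) := Set.Icc (99/100, 99/100) (1, 1)
def KK : Set (ℝ × ℝ) := K1 ∪ K2 ∪ K3 ∪ K4

lemma mem_box {z : ℝ × ℝ} {u v w x : ℝ} :
    z ∈ Set.Icc ((u, v) : ℝ × ℝ) (w, x) ↔ u ≤ z.1 ∧ z.1 ≤ w ∧ v ≤ z.2 ∧ z.2 ≤ x := by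
  simp [Set.mem_Icc, Prod.le_def]; tauto

set_option maxHeartbeats 4000000 in
lemma center_mem (a : ℝ × ℝ) (θ L : ℝ) (hL : 0 < L)
    (hsub : square a θ L ⊆ Set.Icc (0, 0) (1, 1))
    (p q : ℝ × ℝ) (hp : p ∈ square a θ L) (hq : q ∈ square a θ L)
    (hbox : (p ∈ K1 ∧ q ∈ K2) ∨ (p ∈ K1 ∧ q ∈ K3) ∨ (p ∈ K1 ∧ q ∈ K4) ∨
      (p ∈ K2 ∧ q ∈ K3) ∨ (p ∈ K2 ∧ q ∈ K4) ∨ (p ∈ K3 ∧ q ∈ K4)) :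
    ((1/2 : ℝ), (1/2 : ℝ)) ∈ square a θ L := by
  set c := Real.cos θ with hcdef
  set s := Real.sin θ with hsdef
  have hcs : c^2 + s^2 = 1 := by
    rw [hcdef, hsdef, add_comm]; exact Real.sin_sq_add_cos_sq θ
  obtain ⟨u, hu, hup⟩ := hp
  obtain ⟨v, hv, hvq⟩ := hq
  simp only [Set.mem_Icc, Prod.le_def] at hu hv
  obtain ⟨⟨hu1, hu2⟩, ⟨hu3, hu4⟩⟩ := hu
  obtain ⟨⟨hv1, hv2⟩, ⟨hv3, hv4⟩⟩ := hv
  have hp1 : p.1 = a.1 + (u.1*c - u.2*s) := by rw [← hup]; simp [rot, hcdef, hsdef]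
  have hp2 : p.2 = a.2 + (u.1*s + u.2*c) := by rw [← hup]; simp [rot, hcdef, hsdef]
  have hq1 : q.1 = a.1 + (v.1*c - v.2*s) := by rw [← hvq]; simp [rot, hcdef, hsdef]
  have hq2 : q.2 = a.2 + (v.1*s + v.2*c) := by rw [← hvq]; simp [rot, hcdef, hsdef]
  -- corners of the square lie in the unit square
  have hcor : ∀ w : ℝ × ℝ, w ∈ Set.Icc ((0,0) : ℝ × ℝ) (L, L) →
      0 ≤ a.1 + (w.1*c - w.2*s) ∧ a.1 + (w.1*c - w.2*s) ≤ 1 ∧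
      0 ≤ a.2 + (w.1*s + w.2*c) ∧ a.2 + (w.1*s + w.2*c) ≤ 1 := by
    intro w hw
    have := hsub ⟨w, hw, rfl⟩
    rw [mem_box] at this
    have e1 : (a + rot θ w).1 = a.1 + (w.1*c - w.2*s) := by simp [rot, hcdef, hsdef]
    have e2 : (a + rot θ w).2 = a.2 + (w.1*s + w.2*c) := by simp [rot, hcdef, hsdef]
    rw [e1, e2] at this
    tauto
  obtain ⟨c1a, c1b, c1c, c1d⟩ := hcor (0, 0)
    (by rw [mem_box]; exact ⟨le_refl _, hL.le, le_refl _, hL.le⟩)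
  obtain ⟨c2a, c2b, c2c, c2d⟩ := hcor (L, 0)
    (by rw [mem_box]; exact ⟨hL.le, le_refl _, le_refl _, hL.le⟩)
  obtain ⟨c3a, c3b, c3c, c3d⟩ := hcor (0, L)
    (by rw [mem_box]; exact ⟨le_refl _, hL.le, hL.le, le_refl _⟩)
  obtain ⟨c4a, c4b, c4c, c4d⟩ := hcor (L, L)
    (by rw [mem_box]; exact ⟨hL.le, le_refl _, hL.le, le_refl _⟩)
  simp only [zero_mul, mul_zero, sub_zero, add_zero, zero_add, zero_sub] at c1a c1b c1c c1d c2a c2b c2c c2d c3a c3b c3c c3d c4a c4b c4c c4d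
  have hgeo := geomPair a.1 a.2 c s L u.1 u.2 v.1 v.2 hcs hL
    c1a c1b c1c c1d
    c2a c2b c2c c2d
    (by linarith only [c3a]) (by linarith only [c3b]) c3c c3d
    (by linarith only [c4a]) (by linarith only [c4b])
    (by linarith only [c4c]) (by linarith only [c4d])
    hu1 hu3 hu2 hu4 hv1 hv3 hv2 hv4
    (by
      simp only [K1, K2, K3, K4, mem_box] at hbox
      rw [hp1, hp2, hq1, hq2] at hbox
      exact hbox)
  obtain ⟨g1, g2, g3, g4⟩ := hgeo
  refine ⟨((1/2 - a.1)*c + (1/2 - a.2)*s, -(1/2 - a.1)*s + (1/2 - a.2)*c), ?_, ?_⟩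
  · rw [mem_box]
    exact ⟨g1, g2, g3, g4⟩
  · have e1 : (a + rot θ ((1/2 - a.1)*c + (1/2 - a.2)*s, -(1/2 - a.1)*s + (1/2 - a.2)*c)).1 = (1/2 : ℝ) := by
      simp only [rot, Prod.fst_add]
      linear_combination (1/2 - a.1) * hcs
    have e2 : (a + rot θ ((1/2 - a.1)*c + (1/2 - a.2)*s, -(1/2 - a.1)*s + (1/2 - a.2)*c)).2 = (1/2 : ℝ) := by
      simp only [rot, Prod.snd_add]
      linear_combination (1/2 - a.2) * hcs
    exact Prod.ext e1 e2

lemma hIccVol (x1 y1 x2 y2 : ℝ) :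
    volume (Set.Icc ((x1, y1) : ℝ × ℝ) (x2, y2)) =
      ENNReal.ofReal (x2 - x1) * ENNReal.ofReal (y2 - y1) := by
  rw [← Set.Icc_prod_Icc, MeasureTheory.Measure.volume_eq_prod,
    MeasureTheory.Measure.prod_prod, Real.volume_Icc, Real.volume_Icc]

lemma volK1 : volume K1 = ENNReal.ofReal (1/100) * ENNReal.ofReal (1/100) := by
  rw [K1, hIccVol]; norm_num
lemma volK2 : volume K2 = ENNReal.ofReal (1/100) * ENNReal.ofReal (1/100) := by
  rw [K2, hIccVol]; norm_num
lemma volK3 : volume K3 = ENNReal.ofReal (1/100) * ENNReal.ofReal (1/100) := by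
  rw [K3, hIccVol]; norm_num
lemma volK4 : volume K4 = ENNReal.ofReal (1/100) * ENNReal.ofReal (1/100) := by
  rw [K4, hIccVol]; norm_num

lemma mK1 : MeasurableSet K1 := measurableSet_Icc
lemma mK2 : MeasurableSet K2 := measurableSet_Icc
lemma mK3 : MeasurableSet K3 := measurableSet_Icc
lemma mK4 : MeasurableSet K4 := measurableSet_Icc
lemma mKK : MeasurableSet KK :=
  (((mK1.union mK2).union mK3).union mK4)

lemma dis12 : Disjoint K1 K2 := by
  rw [Set.disjoint_left]; intro z h1 h2
  rw [K1, mem_box] at h1; rw [K2, mem_box] at h2; linarith [h1.2.1, h2.1]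
lemma dis13 : Disjoint K1 K3 := by
  rw [Set.disjoint_left]; intro z h1 h2
  rw [K1, mem_box] at h1; rw [K3, mem_box] at h2; linarith [h1.2.2.2, h2.2.2.1]
lemma dis14 : Disjoint K1 K4 := by
  rw [Set.disjoint_left]; intro z h1 h2
  rw [K1, mem_box] at h1; rw [K4, mem_box] at h2; linarith [h1.2.1, h2.1]
lemma dis23 : Disjoint K2 K3 := by
  rw [Set.disjoint_left]; intro z h1 h2
  rw [K2, mem_box] at h1; rw [K3, mem_box] at h2; linarith [h1.1, h2.2.1]
lemma dis24 : Disjoint K2 K4 := by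
  rw [Set.disjoint_left]; intro z h1 h2
  rw [K2, mem_box] at h1; rw [K4, mem_box] at h2; linarith [h1.2.2.2, h2.2.2.1]
lemma dis34 : Disjoint K3 K4 := by
  rw [Set.disjoint_left]; intro z h1 h2
  rw [K3, mem_box] at h1; rw [K4, mem_box] at h2; linarith [h1.2.1, h2.1]

lemma volKK : volume KK = 4 * (ENNReal.ofReal (1/100) * ENNReal.ofReal (1/100)) := by
  rw [KK]
  rw [measure_union (Set.disjoint_union_left.mpr
      ⟨Set.disjoint_union_left.mpr ⟨dis14, dis24⟩, dis34⟩) mK4]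
  rw [measure_union (Set.disjoint_union_left.mpr ⟨dis13, dis23⟩) mK3]
  rw [measure_union dis12 mK2]
  rw [volK1, volK2, volK3, volK4]; ring

lemma hKKsub : KK ⊆ Set.Icc ((0 : ℝ), (0 : ℝ)) (1, 1) := by
  intro z hz
  rw [mem_box]
  rcases hz with ((h | h) | h) | h <;>
    [rw [K1, mem_box] at h; rw [K2, mem_box] at h; rw [K3, mem_box] at h; rw [K4, mem_box] at h] <;>
    obtain ⟨h1, h2, h3, h4⟩ := h <;>
    exact ⟨by linarith, by linarith, by linarith, by linarith⟩

lemma twoBox (X : Set (ℝ × ℝ))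
    (h : ENNReal.ofReal (1/100) * ENNReal.ofReal (1/100) < volume (X ∩ KK)) :
    ∃ p q : ℝ × ℝ, p ∈ X ∧ q ∈ X ∧
      ((p ∈ K1 ∧ q ∈ K2) ∨ (p ∈ K1 ∧ q ∈ K3) ∨ (p ∈ K1 ∧ q ∈ K4) ∨
       (p ∈ K2 ∧ q ∈ K3) ∨ (p ∈ K2 ∧ q ∈ K4) ∨ (p ∈ K3 ∧ q ∈ K4)) := by
  by_cases h1 : (X ∩ K1).Nonempty <;> by_cases h2 : (X ∩ K2).Nonempty <;>
    by_cases h3 : (X ∩ K3).Nonempty <;> by_cases h4 : (X ∩ K4).Nonempty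
  · obtain ⟨p, hpX, hpK⟩ := h1
    obtain ⟨q, hqX, hqK⟩ := h2
    exact ⟨p, q, hpX, hqX, Or.inl ⟨hpK, hqK⟩⟩
  · obtain ⟨p, hpX, hpK⟩ := h1
    obtain ⟨q, hqX, hqK⟩ := h2
    exact ⟨p, q, hpX, hqX, Or.inl ⟨hpK, hqK⟩⟩
  · obtain ⟨p, hpX, hpK⟩ := h1
    obtain ⟨q, hqX, hqK⟩ := h2
    exact ⟨p, q, hpX, hqX, Or.inl ⟨hpK, hqK⟩⟩
  · obtain ⟨p, hpX, hpK⟩ := h1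
    obtain ⟨q, hqX, hqK⟩ := h2
    exact ⟨p, q, hpX, hqX, Or.inl ⟨hpK, hqK⟩⟩
  · obtain ⟨p, hpX, hpK⟩ := h1
    obtain ⟨q, hqX, hqK⟩ := h3
    exact ⟨p, q, hpX, hqX, Or.inr (Or.inl ⟨hpK, hqK⟩)⟩
  · obtain ⟨p, hpX, hpK⟩ := h1
    obtain ⟨q, hqX, hqK⟩ := h3
    exact ⟨p, q, hpX, hqX, Or.inr (Or.inl ⟨hpK, hqK⟩)⟩
  · obtain ⟨p, hpX, hpK⟩ := h1
    obtain ⟨q, hqX, hqK⟩ := h4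
    exact ⟨p, q, hpX, hqX, Or.inr (Or.inr (Or.inl ⟨hpK, hqK⟩))⟩
  · exfalso
    rw [Set.not_nonempty_iff_eq_empty] at h2 h3 h4
    have hs : X ∩ KK ⊆ K1 := by
      rintro z ⟨hzX, hzK⟩
      rcases hzK with ((hz | hz) | hz) | hz
      · exact hz
      · rw [Set.eq_empty_iff_forall_notMem] at h2
        exact absurd ⟨hzX, hz⟩ (h2 z)
      · rw [Set.eq_empty_iff_forall_notMem] at h3
        exact absurd ⟨hzX, hz⟩ (h3 z)
      · rw [Set.eq_empty_iff_forall_notMem] at h4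
        exact absurd ⟨hzX, hz⟩ (h4 z)
    exact absurd h (not_lt.mpr (le_trans (measure_mono hs) (le_of_eq volK1)))
  · obtain ⟨p, hpX, hpK⟩ := h2
    obtain ⟨q, hqX, hqK⟩ := h3
    exact ⟨p, q, hpX, hqX, Or.inr (Or.inr (Or.inr (Or.inl ⟨hpK, hqK⟩)))⟩
  · obtain ⟨p, hpX, hpK⟩ := h2
    obtain ⟨q, hqX, hqK⟩ := h3
    exact ⟨p, q, hpX, hqX, Or.inr (Or.inr (Or.inr (Or.inl ⟨hpK, hqK⟩)))⟩
  · obtain ⟨p, hpX, hpK⟩ := h2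
    obtain ⟨q, hqX, hqK⟩ := h4
    exact ⟨p, q, hpX, hqX, Or.inr (Or.inr (Or.inr (Or.inr (Or.inl ⟨hpK, hqK⟩))))⟩
  · exfalso
    rw [Set.not_nonempty_iff_eq_empty] at h1 h3 h4
    have hs : X ∩ KK ⊆ K2 := by
      rintro z ⟨hzX, hzK⟩
      rcases hzK with ((hz | hz) | hz) | hz
      · rw [Set.eq_empty_iff_forall_notMem] at h1
        exact absurd ⟨hzX, hz⟩ (h1 z)
      · exact hz
      · rw [Set.eq_empty_iff_forall_notMem] at h3
        exact absurd ⟨hzX, hz⟩ (h3 z)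
      · rw [Set.eq_empty_iff_forall_notMem] at h4
        exact absurd ⟨hzX, hz⟩ (h4 z)
    exact absurd h (not_lt.mpr (le_trans (measure_mono hs) (le_of_eq volK2)))
  · obtain ⟨p, hpX, hpK⟩ := h3
    obtain ⟨q, hqX, hqK⟩ := h4
    exact ⟨p, q, hpX, hqX, Or.inr (Or.inr (Or.inr (Or.inr (Or.inr ⟨hpK, hqK⟩))))⟩
  · exfalso
    rw [Set.not_nonempty_iff_eq_empty] at h1 h2 h4
    have hs : X ∩ KK ⊆ K3 := by
      rintro z ⟨hzX, hzK⟩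
      rcases hzK with ((hz | hz) | hz) | hz
      · rw [Set.eq_empty_iff_forall_notMem] at h1
        exact absurd ⟨hzX, hz⟩ (h1 z)
      · rw [Set.eq_empty_iff_forall_notMem] at h2
        exact absurd ⟨hzX, hz⟩ (h2 z)
      · exact hz
      · rw [Set.eq_empty_iff_forall_notMem] at h4
        exact absurd ⟨hzX, hz⟩ (h4 z)
    exact absurd h (not_lt.mpr (le_trans (measure_mono hs) (le_of_eq volK3)))
  · exfalso
    rw [Set.not_nonempty_iff_eq_empty] at h1 h2 h3
    have hs : X ∩ KK ⊆ K4 := by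
      rintro z ⟨hzX, hzK⟩
      rcases hzK with ((hz | hz) | hz) | hz
      · rw [Set.eq_empty_iff_forall_notMem] at h1
        exact absurd ⟨hzX, hz⟩ (h1 z)
      · rw [Set.eq_empty_iff_forall_notMem] at h2
        exact absurd ⟨hzX, hz⟩ (h2 z)
      · rw [Set.eq_empty_iff_forall_notMem] at h3
        exact absurd ⟨hzX, hz⟩ (h3 z)
      · exact hz
    exact absurd h (not_lt.mpr (le_trans (measure_mono hs) (le_of_eq volK4)))
  · exfalso
    rw [Set.not_nonempty_iff_eq_empty] at h2 h3 h4
    have hs : X ∩ KK ⊆ K1 := by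
      rintro z ⟨hzX, hzK⟩
      rcases hzK with ((hz | hz) | hz) | hz
      · exact hz
      · rw [Set.eq_empty_iff_forall_notMem] at h2
        exact absurd ⟨hzX, hz⟩ (h2 z)
      · rw [Set.eq_empty_iff_forall_notMem] at h3
        exact absurd ⟨hzX, hz⟩ (h3 z)
      · rw [Set.eq_empty_iff_forall_notMem] at h4
        exact absurd ⟨hzX, hz⟩ (h4 z)
    exact absurd h (not_lt.mpr (le_trans (measure_mono hs) (le_of_eq volK1)))

/-- There is a compact square cake `C = [0,1]²` and finite absolutely continuous value
measures `V₁, V₂` (uniform on tiny discs near the four corners) such that every allocation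
of two disjoint square pieces of `C` gives some agent at most `1/4` of their total value:
`Prop(Square, 2, Squares) ≤ 1/4`. -/
theorem square_cake_two_agents_upper_bound :
    ∃ C : Set (ℝ × ℝ), IsCompact C ∧ C = Set.Icc ((0 : ℝ), (0 : ℝ)) (1, 1) ∧
      ∃ V₁ V₂ : Measure (ℝ × ℝ),
        IsFiniteMeasure V₁ ∧ IsFiniteMeasure V₂ ∧
        V₁ ≪ volume ∧ V₂ ≪ volume ∧ V₁ C ≠ 0 ∧ V₂ C ≠ 0 ∧
        ∀ X₁ X₂ : Set (ℝ × ℝ), X₁ ∈ Squares → X₂ ∈ Squares →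
          X₁ ⊆ C → X₂ ⊆ C → Disjoint X₁ X₂ →
          min (V₁ X₁ / V₁ C) (V₂ X₂ / V₂ C) ≤ 1 / 4 := by

  have hVC : volume.restrict KK (Set.Icc ((0 : ℝ), (0 : ℝ)) (1, 1)) =
      4 * (ENNReal.ofReal (1/100) * ENNReal.ofReal (1/100)) := by
    rw [Measure.restrict_apply' mKK, Set.inter_eq_self_of_subset_right hKKsub, volKK]
  have he0 : (ENNReal.ofReal (1/100) * ENNReal.ofReal (1/100)) ≠ 0 :=
    mul_ne_zero (ENNReal.ofReal_pos.mpr (by norm_num)).ne'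
      (ENNReal.ofReal_pos.mpr (by norm_num)).ne'
  have hfin : IsFiniteMeasure (volume.restrict KK) := by
    constructor
    rw [Measure.restrict_apply_univ]
    exact lt_of_le_of_lt (le_of_eq volKK)
      (ENNReal.mul_lt_top (by norm_num) (ENNReal.mul_lt_top ENNReal.ofReal_lt_top ENNReal.ofReal_lt_top))
  have hac : volume.restrict KK ≪ volume :=
    Measure.absolutelyContinuous_of_le Measure.restrict_le_self
  refine ⟨Set.Icc ((0 : ℝ), (0 : ℝ)) (1, 1), isCompact_Icc, rfl,
    volume.restrict KK, volume.restrict KK, hfin, hfin, hac, hac, ?_, ?_, ?_⟩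
  · rw [hVC]; exact mul_ne_zero (by norm_num) he0
  · rw [hVC]; exact mul_ne_zero (by norm_num) he0
  · intro X₁ X₂ hX1 hX2 hsub1 hsub2 hdis
    by_contra hcon
    obtain ⟨hm1, hm2⟩ := lt_min_iff.mp (not_le.mp hcon)
    have key : ∀ X : Set (ℝ × ℝ),
        1 / 4 < volume.restrict KK X / volume.restrict KK (Set.Icc ((0:ℝ),(0:ℝ)) (1,1)) →
        ENNReal.ofReal (1/100) * ENNReal.ofReal (1/100) < volume (X ∩ KK) := by
      intro X hX
      have h := ENNReal.mul_lt_of_lt_div hX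
      rw [hVC, ← mul_assoc] at h
      have h14 : (1/4 : ℝ≥0∞) * 4 = 1 := by
        rw [ENNReal.div_mul_cancel (by norm_num) (by norm_num)]
      rw [h14, one_mul, Measure.restrict_apply' mKK] at h
      exact h
    obtain ⟨p, q, hpX, hqX, hbox1⟩ := twoBox X₁ (key X₁ hm1)
    obtain ⟨p', q', hpX', hqX', hbox2⟩ := twoBox X₂ (key X₂ hm2)
    obtain ⟨a, θ, L, hL, rfl⟩ := hX1
    obtain ⟨a', θ', L', hL', rfl⟩ := hX2
    have hO1 := center_mem a θ L hL hsub1 p q hpX hqX hbox1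
    have hO2 := center_mem a' θ' L' hL' hsub2 p' q' hpX' hqX' hbox2
    exact Set.disjoint_left.mp hdis hO1 hO2

end
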